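/- For every simple graph G on a finite vertex set V, every transition function t on V, and every vertex v ∈ V, the matrices M(G^v, t^{G,v}) and M(G, t) have the same right null space over GF(2), i.e. { x ∈ GF(2)^V : M(G^v, t^{G,v}) · x = 0 } = { x ∈ GF(2)^V : M(G, t) · x = 0 }, and they have the same rank over GF(2). (This is the combinatorial form of the fact that all modified interlacement matrices M(C, P) of a fixed circuit partition P, taken with respect to κ-equivalent Euler systems, have the same kernel and rank.) -/

import Mathlib

open scoped Classical

/-- The three transitions at a vertex, labeled relative to an Euler system. -/
inductive Transition : Type
  | phi | chi | psi
  deriving DecidableEq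

variable {V : Type*} [Fintype V] [DecidableEq V]

/-- Simple local complement `G^v`: toggle adjacency between distinct neighbors of `v`. -/
def localComp (G : SimpleGraph V) (v : V) : SimpleGraph V where
  Adj u w := u ≠ w ∧ Xor' (G.Adj u w) (G.Adj v u ∧ G.Adj v w)
  symm := by
    constructor
    rintro u w ⟨hne, hx⟩
    refine ⟨hne.symm, ?_⟩
    rw [G.adj_comm w u, and_comm]
    exact hx
  loopless := by constructor; rintro u ⟨hne, _⟩; exact hne rfl

/-- Modified interlacement matrix `M(G, t)` over GF(2). -/
noncomputable def Mmat (G : SimpleGraph V) (t : V → Transition) : Matrix V V (ZMod 2) :=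
  Matrix.of fun w u =>
    if w = u then (if t u = Transition.chi then 0 else 1)
    else if t u = Transition.phi then 0
    else if G.Adj w u then 1 else 0

/-- Updated transition function `t^{G,v}`. -/
noncomputable def updT (G : SimpleGraph V) (v : V) (t : V → Transition) : V → Transition :=
  fun u =>
    if u = v then
      match t u with
      | Transition.phi => Transition.psi
      | Transition.psi => Transition.phi
      | Transition.chi => Transition.chi
    else if G.Adj v u then
      match t u with
      | Transition.chi => Transition.psi
      | Transition.psi => Transition.chi
      | Transition.phi => Transition.phi
    else t u

/-- Modified local complement of a matrix, taken with respect to `G` at `v`: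
add row `v` to the row of every neighbor of `v` in `G`. -/
noncomputable def modLC (G : SimpleGraph V) (v : V) (M : Matrix V V (ZMod 2)) :
    Matrix V V (ZMod 2) :=
  Matrix.of fun w u => if G.Adj v w then M w u + M v u else M w u

set_option maxHeartbeats 1600000 in
theorem Mmat_localComp_eq_modLC (G : SimpleGraph V) (t : V → Transition) (v : V) :
    Mmat (localComp G v) (updT G v t) = modLC G v (Mmat G t) := by
  ext w u
  rcases htu : t u <;>
  by_cases hwu : w = u <;> by_cases huv : u = v <;> by_cases hvu2 : v = u <;>
    by_cases hvu : G.Adj v u <;>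
    by_cases hvw : G.Adj v w <;> by_cases hG : G.Adj w u <;>
    subst_vars <;>
    simp_all [Mmat, modLC, localComp, updT, Matrix.of_apply, Xor', SimpleGraph.irrefl] <;>
    first | decide | exact hG hvw.symm | exact hvw hG.symm

theorem ker_modLC (G : SimpleGraph V) (v : V) (M : Matrix V V (ZMod 2)) :
    {x : V → ZMod 2 | (modLC G v M).mulVec x = 0} = {x : V → ZMod 2 | M.mulVec x = 0} := by
  have hmv : ∀ (x : V → ZMod 2) (w : V), (modLC G v M).mulVec x w =
      if G.Adj v w then M.mulVec x w + M.mulVec x v else M.mulVec x w := by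
    intro x w
    simp only [modLC, Matrix.mulVec, dotProduct, Matrix.of_apply]
    split_ifs with h
    · simp [add_mul, Finset.sum_add_distrib]
    · rfl
  ext x
  simp only [Set.mem_setOf_eq, funext_iff, Pi.zero_apply]
  constructor
  · intro h w
    have hv := h v
    rw [hmv] at hv
    simp [SimpleGraph.irrefl] at hv
    have hw := h w
    rw [hmv] at hw
    split_ifs at hw with hadj
    · rwa [hv, add_zero] at hw
    · exact hw
  · intro h w
    rw [hmv]
    simp [h w, h v]

/-- `M(G^v, t^{G,v})` and `M(G, t)` have the same right null space and the
same rank over GF(2). -/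
theorem ker_rank_localComp (G : SimpleGraph V) (t : V → Transition) (v : V) :
    {x : V → ZMod 2 | (Mmat (localComp G v) (updT G v t)).mulVec x = 0} =
      {x : V → ZMod 2 | (Mmat G t).mulVec x = 0} ∧
    (Mmat (localComp G v) (updT G v t)).rank = (Mmat G t).rank := by
  have hset : {x : V → ZMod 2 | (Mmat (localComp G v) (updT G v t)).mulVec x = 0} =
      {x : V → ZMod 2 | (Mmat G t).mulVec x = 0} := by
    rw [Mmat_localComp_eq_modLC]; exact ker_modLC G v (Mmat G t)
  refine ⟨hset, ?_⟩
  have hker : LinearMap.ker (Mmat (localComp G v) (updT G v t)).mulVecLin =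
      LinearMap.ker (Mmat G t).mulVecLin := by
    ext x
    have := Set.ext_iff.mp hset x
    simpa [LinearMap.mem_ker, Matrix.mulVecLin_apply] using this
  have h1 := (Mmat (localComp G v) (updT G v t)).mulVecLin.finrank_range_add_finrank_ker
  have h2 := (Mmat G t).mulVecLin.finrank_range_add_finrank_ker
  rw [hker] at h1
  rw [Matrix.rank, Matrix.rank]
  omega
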